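/- (Lemma 3) Let C = {x : h(x) ≥ 0} be a nonempty compact set with h continuously differentiable, C = closure(Int C), Int(C) = {h > 0}, ∂C = {h = 0}. Suppose ḣ(x) := L_f h(x) > 0 for all x ∈ ∂C. Then for every integer k ≥ 1 there exists γ > 0 such that L_f h(x) ≥ −γ h(x)ᵏ for all x ∈ Int(C). -/

import Mathlib

/-- Lemma 3: C = {h ≥ 0} nonempty compact, C = closure{h > 0}, and L_f h > 0 on
{h = 0}; then for each k ≥ 1 there is γ > 0 with L_f h ≥ −γ hᵏ on Int(C). -/
theorem stmt13 (n : ℕ) (f : (Fin n → ℝ) → (Fin n → ℝ)) (hf : LocallyLipschitz f)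
    (h : (Fin n → ℝ) → ℝ) (hh : ContDiff ℝ 1 h)
    (hne : {x | 0 ≤ h x}.Nonempty) (hcomp : IsCompact {x | 0 ≤ h x})
    (hcl : {x | 0 ≤ h x} = closure {x | 0 < h x})
    (hbdry : ∀ x, h x = 0 → 0 < fderiv ℝ h x (f x)) :
    ∀ k : ℕ, 1 ≤ k → ∃ γ : ℝ, 0 < γ ∧
      ∀ x, 0 < h x → fderiv ℝ h x (f x) ≥ -γ * (h x) ^ k := by
  intro k hk
  set g : (Fin n → ℝ) → ℝ := fun x => fderiv ℝ h x (f x) with hg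
  have hgc : Continuous g :=
    (hh.continuous_fderiv one_ne_zero).clm_apply hf.continuous
  have hhc : Continuous h := hh.continuous
  set S : Set (Fin n → ℝ) := {x | 0 ≤ h x ∧ g x ≤ 0} with hS
  have hSclosed : IsClosed S :=
    (isClosed_le continuous_const hhc).inter (isClosed_le hgc continuous_const)
  have hScomp : IsCompact S :=
    hcomp.of_isClosed_subset hSclosed (fun x hx => hx.1)
  rcases S.eq_empty_or_nonempty with hSe | hSne
  · refine ⟨1, one_pos, fun x hx => ?_⟩
    have hgx : 0 < g x := by
      by_contra hle
      push_neg at hle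
      have : x ∈ S := ⟨hx.le, hle⟩
      rw [hSe] at this
      exact this
    have : (0:ℝ) < (h x) ^ k := pow_pos hx k
    simp only [hg] at hgx
    nlinarith
  · obtain ⟨x₀, hx₀S, hx₀min⟩ := hScomp.exists_isMinOn hSne hhc.continuousOn
    obtain ⟨x₁, hx₁S, hx₁min⟩ := hScomp.exists_isMinOn hSne hgc.continuousOn
    set m := h x₀ with hm
    have hmpos : 0 < m := by
      rcases lt_or_eq_of_le hx₀S.1 with hlt | heq
      · exact hlt
      · exact absurd (hbdry x₀ heq.symm) (not_lt.2 hx₀S.2)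
    set M := -g x₁ with hM
    have hMnn : 0 ≤ M := by simp only [hM]; linarith [hx₁S.2]
    have hmk : (0:ℝ) < m ^ k := pow_pos hmpos k
    refine ⟨M / m ^ k + 1, by positivity, fun x hx => ?_⟩
    have hpk : (0:ℝ) < (h x) ^ k := pow_pos hx k
    rcases le_or_gt 0 (g x) with hge | hlt
    · have : (0:ℝ) < (M / m ^ k + 1) * (h x) ^ k := by positivity
      simp only [hg] at hge ⊢
      nlinarith
    · have hxS : x ∈ S := ⟨hx.le, hlt.le⟩
      have h1 : m ≤ h x := hx₀min hxS
      have h2 : -M ≤ g x := by simpa [hM] using hx₁min hxS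
      have hpow : m ^ k ≤ (h x) ^ k := pow_le_pow_left₀ hmpos.le h1 k
      have key : M ≤ (M / m ^ k + 1) * (h x) ^ k := by
        have hMle : M ≤ (M / m ^ k) * m ^ k := by
          rw [div_mul_cancel₀ _ hmk.ne']
        have hMnn' : 0 ≤ M / m ^ k := by positivity
        nlinarith
      simp only [hg] at h2 ⊢
      nlinarith
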